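/- Let E be a directed graph such that each cycle of E is either without exits or extreme and such that each infinite emitter of E lies on a cycle. If H ⊆ E⁰ is hereditary and saturated, then no vertex of R(H) − H lies on a cycle, every vertex of R(H) − H is regular, and B_H = ∅. -/
import Mathlib


namespace GraphAnn

variable {V E : Type*}

/-- `u ≥ v`: there is a (possibly trivial) path from `u` to `v`. -/
def Reach (s r : E → V) : V → V → Prop :=
  Relation.ReflTransGen (fun a b => ∃ e, s e = a ∧ r e = b)

/-- The root `R(W)` of a set of vertices. -/
def Root (s r : E → V) (W : Set V) : Set V :=
  {u | ∃ v ∈ W, Reach s r u v}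

def Hereditary (s r : E → V) (H : Set V) : Prop :=
  ∀ u v, u ∈ H → Reach s r u v → v ∈ H

def IsSink (s : E → V) (v : V) : Prop := ∀ e : E, s e ≠ v

def IsInfiniteEmitter (s : E → V) (v : V) : Prop := {e : E | s e = v}.Infinite

def IsRegular (s : E → V) (v : V) : Prop := ¬ IsSink s v ∧ ¬ IsInfiniteEmitter s v

def Saturated (s r : E → V) (H : Set V) : Prop :=
  ∀ v, IsRegular s v → (∀ e : E, s e = v → r e ∈ H) → v ∈ H

/-- `V⊥ = E⁰ − R(V)`. -/
def perp (s r : E → V) (W : Set V) : Set V := {v | v ∉ Root s r W}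

/-- Breaking vertices `B_H`. -/
def Breaking (s r : E → V) (H : Set V) : Set V :=
  {v | v ∉ H ∧ IsInfiniteEmitter s v ∧
    {e : E | s e = v ∧ r e ∉ H}.Nonempty ∧ {e : E | s e = v ∧ r e ∉ H}.Finite}

/-- `(H,S)` is an admissible pair. -/
def Admissible (s r : E → V) (H S : Set V) : Prop :=
  Hereditary s r H ∧ Saturated s r H ∧ S ⊆ Breaking s r H

/-- `S⊥ = B_{H⊥} − S`. -/
def Sperp (s r : E → V) (H S : Set V) : Set V := Breaking s r (perp s r H) \ S

/-- A cycle: a closed path of positive length in which distinct edges have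
distinct sources. -/
structure GCycle (s r : E → V) where
  edges : List E
  ne : edges ≠ []
  chain : edges.Chain' (fun e f => r e = s f)
  closed : r (edges.getLast ne) = s (edges.head ne)
  srcNodup : (edges.map s).Nodup

/-- The vertex set `c⁰` of a cycle. -/
def GCycle.verts {s r : E → V} (c : GCycle s r) : Set V :=
  {v | ∃ e ∈ c.edges, s e = v}

/-- A cycle has an exit. -/
def GCycle.HasExit {s r : E → V} (c : GCycle s r) : Prop :=
  ∃ e, s e ∈ c.verts ∧ e ∉ c.edges

/-- An extreme cycle: it has an exit and every exit returns. -/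
def GCycle.Extreme {s r : E → V} (c : GCycle s r) : Prop :=
  c.HasExit ∧ ∀ v ∈ c.verts, ∀ w, Reach s r v w → ∃ u ∈ c.verts, Reach s r w u

/-- The vertex set `α⁰` of an infinite path `α`. -/
def InfPathVerts (s : E → V) (α : ℕ → E) : Set V := {v | ∃ n, s (α n) = v}

/-- Conditions (a), (b), (c): the graph is all-reflexive. -/
def AllReflexiveGraph (s r : E → V) : Prop :=
  (∀ c : GCycle s r, ¬ c.HasExit ∨ c.Extreme) ∧
  (∀ v, IsInfiniteEmitter s v → ∃ c : GCycle s r, v ∈ c.verts) ∧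
  (∀ α : ℕ → E, (∀ n, r (α n) = s (α (n + 1))) →
    {e : E | s e ∈ InfPathVerts s α ∧ r e ∉ Root s r (InfPathVerts s α)}.Finite)


section Aux

variable {s r : E → V}

lemma reach_head_mem (l : List E) (hne : l ≠ []) (hch : l.Chain' (fun e f => r e = s f))
    {e : E} (he : e ∈ l) : Reach s r (s (l.head hne)) (s e) := by
  induction l with
  | nil => exact absurd rfl hne
  | cons a t ih =>
    rcases List.mem_cons.mp he with h | h
    · subst h; exact Relation.ReflTransGen.refl
    · have ht : t ≠ [] := List.ne_nil_of_mem h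
      have hch' : t.Chain' (fun e f => r e = s f) := hch.tail
      have hstep : r a = s (t.head ht) := by
        rcases t with _ | ⟨b, t'⟩
        · exact absurd rfl ht
        · exact List.isChain_cons_cons.mp hch |>.1
      have : Reach s r (s a) (s (t.head ht)) :=
        Relation.ReflTransGen.single ⟨a, rfl, hstep⟩
      exact this.trans (ih ht hch' h)

lemma reach_mem_last (l : List E) (hne : l ≠ []) (hch : l.Chain' (fun e f => r e = s f))
    {e : E} (he : e ∈ l) : Reach s r (s e) (r (l.getLast hne)) := by
  induction l generalizing e with
  | nil => exact absurd rfl hne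
  | cons a t ih =>
    rcases List.mem_cons.mp he with h | h
    · subst h
      rcases eq_or_ne t [] with ht | ht
      · subst ht
        exact Relation.ReflTransGen.single ⟨e, rfl, rfl⟩
      · have hstep : r e = s (t.head ht) := by
          rcases t with _ | ⟨b, t'⟩
          · exact absurd rfl ht
          · exact List.isChain_cons_cons.mp hch |>.1
        have h1 : Reach s r (s e) (s (t.head ht)) :=
          Relation.ReflTransGen.single ⟨e, rfl, hstep⟩
        have h2 : Reach s r (s (t.head ht)) (r (t.getLast ht)) :=
          ih ht hch.tail (List.head_mem ht)
        rw [List.getLast_cons ht]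
        exact h1.trans h2
    · have ht : t ≠ [] := List.ne_nil_of_mem h
      rw [List.getLast_cons ht]
      exact ih ht hch.tail h

/-- Any vertex of a cycle reaches any other vertex of the cycle. -/
lemma GCycle.reach_verts (c : GCycle s r) {v w : V} (hv : v ∈ c.verts) (hw : w ∈ c.verts) :
    Reach s r v w := by
  obtain ⟨e, he, rfl⟩ := hv
  obtain ⟨f, hf, rfl⟩ := hw
  have h1 : Reach s r (s e) (r (c.edges.getLast c.ne)) := reach_mem_last _ c.ne c.chain he
  have h2 : Reach s r (s (c.edges.head c.ne)) (s f) := reach_head_mem _ c.ne c.chain hf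
  rw [c.closed] at h1
  exact h1.trans h2

lemma GCycle.r_mem_verts (c : GCycle s r) {e : E} (he : e ∈ c.edges) : r e ∈ c.verts := by
  have key : ∀ l : List E, l.Chain' (fun e f => r e = s f) → ∀ hne : l ≠ [], e ∈ l →
      e = l.getLast hne ∨ ∃ f ∈ l, r e = s f := by
    intro l hch hne hel
    induction l with
    | nil => exact absurd rfl hne
    | cons a t ih =>
      rcases List.mem_cons.mp hel with h | h
      · subst h
        rcases eq_or_ne t [] with ht | ht
        · subst ht; exact Or.inl rfl
        · refine Or.inr ⟨t.head ht, List.mem_cons_of_mem _ (List.head_mem ht), ?_⟩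
          rcases t with _ | ⟨b, t'⟩
          · exact absurd rfl ht
          · exact List.isChain_cons_cons.mp hch |>.1
      · have ht : t ≠ [] := List.ne_nil_of_mem h
        rcases ih hch.tail ht h with h1 | ⟨f, hf, hrf⟩
        · rw [List.getLast_cons ht]; exact Or.inl h1
        · exact Or.inr ⟨f, List.mem_cons_of_mem _ hf, hrf⟩
  rcases key c.edges c.chain c.ne he with h | ⟨f, hf, hrf⟩
  · rw [h, c.closed]
    exact ⟨c.edges.head c.ne, List.head_mem c.ne, rfl⟩
  · exact ⟨f, hf, hrf.symm⟩

/-- If a cycle has no exit, reachability from a cycle vertex stays in the cycle. -/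
lemma GCycle.reach_stays (c : GCycle s r) (hne : ¬ c.HasExit) {v w : V}
    (hv : v ∈ c.verts) (hr : Reach s r v w) : w ∈ c.verts := by
  induction hr with
  | refl => exact hv
  | tail _ hstep ih =>
    obtain ⟨e, hse, hre⟩ := hstep
    have he : e ∈ c.edges := by
      by_contra hnot
      exact hne ⟨e, hse ▸ ih, hnot⟩
    rw [← hre]
    exact c.r_mem_verts he

end Aux

/-- If each cycle is either without exits or extreme and each infinite emitter
lies on a cycle, then for hereditary and saturated `H`, no vertex of
`R(H) − H` is on a cycle, each vertex of `R(H) − H` is regular, and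
`B_H = ∅`. -/
theorem root_diff_no_cycle_regular (s r : E → V)
    (hcyc : ∀ c : GCycle s r, ¬ c.HasExit ∨ c.Extreme)
    (hinf : ∀ v, IsInfiniteEmitter s v → ∃ c : GCycle s r, v ∈ c.verts)
    (H : Set V) (hHer : Hereditary s r H) (hSat : Saturated s r H) :
    (∀ v ∈ Root s r H \ H, ¬ ∃ c : GCycle s r, v ∈ c.verts) ∧
      (∀ v ∈ Root s r H \ H, IsRegular s v) ∧
      Breaking s r H = ∅ := by
  have claim1 : ∀ v ∈ Root s r H \ H, ¬ ∃ c : GCycle s r, v ∈ c.verts := by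
    rintro v ⟨⟨h, hh, hvh⟩, hvH⟩ ⟨c, hvc⟩
    rcases hcyc c with hnoex | hext
    · have hhc : h ∈ c.verts := c.reach_stays hnoex hvc hvh
      exact hvH (hHer h v hh (c.reach_verts hhc hvc))
    · obtain ⟨u, huc, hhu⟩ := hext.2 v hvc h hvh
      have : u ∈ H := hHer h u hh hhu
      exact hvH (hHer u v this (c.reach_verts huc hvc))
  have claim2 : ∀ v ∈ Root s r H \ H, IsRegular s v := by
    rintro v hv
    obtain ⟨⟨h, hh, hvh⟩, hvH⟩ := hv
    constructor
    · rcases hvh.cases_head with rfl | ⟨b, ⟨e, hse, _⟩, _⟩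
      · exact absurd hh hvH
      · intro hs; exact hs e hse
    · intro hinfv
      obtain ⟨c, hvc⟩ := hinf v hinfv
      exact claim1 v ⟨⟨h, hh, hvh⟩, hvH⟩ ⟨c, hvc⟩
  refine ⟨claim1, claim2, ?_⟩
  ext v
  simp only [Set.mem_empty_iff_false, iff_false]
  rintro ⟨hvH, hinfv, hne', hfin⟩
  have : ({e : E | s e = v} \ {e : E | s e = v ∧ r e ∉ H}).Infinite :=
    hinfv.diff hfin
  obtain ⟨e, he1, he2⟩ := this.nonempty
  have hre : r e ∈ H := by
    by_contra hnot
    exact he2 ⟨he1, hnot⟩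
  have hroot : v ∈ Root s r H \ H :=
    ⟨⟨r e, hre, Relation.ReflTransGen.single ⟨e, he1, rfl⟩⟩, hvH⟩
  exact (claim2 v hroot).2 hinfv


end GraphAnn
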